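/- Let ε₀ satisfy E(exp(t|ε₀|^ω)) < ∞ for some t > 0 and ω > 0. Define μ_a = 1 + E{|ε₀|^a 1(|ε₀|>1)} for a > 0. Then for any a, b ≥ 0 with a > 0 there is a constant C such that Σ_{ℓ=1}^L μ_{aℓ+b} ≤ (CL)^{aL/ω} for all L ≥ 1. -/

import Mathlib

/-- Key scalar bound: `y^s ≤ (max 1 (s/t))^s * exp(t*y)` for positive `y, s, t`. -/
lemma aux_rpow_le_exp (t s y : ℝ) (ht : 0 < t) (hs : 0 < s) (hy : 0 < y) :
    y ^ s ≤ (max 1 (s / t)) ^ s * Real.exp (t * y) := by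
  have hK : (0:ℝ) < max 1 (s / t) := lt_of_lt_of_le one_pos (le_max_left _ _)
  rw [Real.rpow_def_of_pos hy, Real.rpow_def_of_pos hK, ← Real.exp_add]
  apply Real.exp_le_exp.2
  have h2 : Real.log (y * (t / s)) ≤ y * (t / s) - 1 :=
    Real.log_le_sub_one_of_pos (by positivity)
  have h3 : Real.log (y * (t / s)) = Real.log y + Real.log (t / s) :=
    Real.log_mul (ne_of_gt hy) (by positivity)
  have h4 : Real.log (s / t) ≤ Real.log (max 1 (s / t)) :=
    Real.log_le_log (by positivity) (le_max_right _ _)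
  have h5 : Real.log (t / s) = - Real.log (s / t) := by
    rw [Real.log_div ht.ne' hs.ne', Real.log_div hs.ne' ht.ne']; ring
  have h1 : Real.log y ≤ Real.log (max 1 (s / t)) + t / s * y := by nlinarith
  have h6 := mul_le_mul_of_nonneg_right h1 hs.le
  have h7 : (Real.log (max 1 (s / t)) + t / s * y) * s
      = Real.log (max 1 (s / t)) * s + t * y := by field_simp
  linarith [h6, h7.le]

/-- Pointwise bound on the truncated power. -/
lemma aux_pointwise (t ω c x : ℝ) (ht : 0 < t) (hω : 0 < ω) (hc : 0 < c) :
    (if 1 < |x| then |x| ^ c else 0)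
      ≤ (max 1 (c / (t * ω))) ^ (c / ω) * Real.exp (t * |x| ^ ω) := by
  split_ifs with h
  · have hx : (0:ℝ) < |x| := lt_trans one_pos h
    have hy : (0:ℝ) < |x| ^ ω := Real.rpow_pos_of_pos hx ω
    have key := aux_rpow_le_exp t (c / ω) (|x| ^ ω) ht (by positivity) hy
    have h1 : |x| ^ c = (|x| ^ ω) ^ (c / ω) := by
      rw [← Real.rpow_mul (abs_nonneg x)]
      congr 1
      field_simp
    have h2 : c / ω / t = c / (t * ω) := by
      rw [div_div]; ring_nf
    rw [h1, ← h2]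
    exact key
  · positivity

/-- Final arithmetic inequality. -/
lemma aux_final (a b ω M K₀ l : ℝ) (ha : 0 < a) (hb : 0 ≤ b) (hω : 0 < ω)
    (hM : 1 ≤ M) (hK : 1 ≤ K₀) (hl : 1 ≤ l) :
    l * (2 * M * (K₀ * l) ^ ((a * l + b) / ω))
      ≤ ((K₀ * Real.exp (ω / a * (Real.log (2 * M * K₀ ^ (b / ω)) + (1 + b / ω)))) * l)
          ^ (a * l / ω) := by
  have hl0 : (0:ℝ) < l := lt_of_lt_of_le one_pos hl
  have hK0 : (0:ℝ) < K₀ := lt_of_lt_of_le one_pos hK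
  have hKl : (0:ℝ) < K₀ * l := by positivity
  have hKb : (1:ℝ) ≤ K₀ ^ (b / ω) := Real.one_le_rpow hK (by positivity)
  have hA1 : (1:ℝ) ≤ 2 * M * K₀ ^ (b / ω) := by nlinarith
  have hA0 : (0:ℝ) < 2 * M * K₀ ^ (b / ω) := lt_of_lt_of_le one_pos hA1
  have hlogA : 0 ≤ Real.log (2 * M * K₀ ^ (b / ω)) := Real.log_nonneg hA1
  -- RHS rewrite
  have hrhs : ((K₀ * Real.exp (ω / a * (Real.log (2 * M * K₀ ^ (b / ω)) + (1 + b / ω)))) * l)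
        ^ (a * l / ω)
      = Real.exp ((Real.log (2 * M * K₀ ^ (b / ω)) + (1 + b / ω)) * l)
          * (K₀ * l) ^ (a * l / ω) := by
    have h1 : (K₀ * Real.exp (ω / a * (Real.log (2 * M * K₀ ^ (b / ω)) + (1 + b / ω)))) * l
        = Real.exp (ω / a * (Real.log (2 * M * K₀ ^ (b / ω)) + (1 + b / ω))) * (K₀ * l) := by
      ring
    rw [h1, Real.mul_rpow (Real.exp_pos _).le hKl.le]
    congr 1
    rw [← Real.exp_mul]
    congr 1
    field_simp
  -- LHS rewrite
  have e1 : (K₀ * l) ^ ((a * l + b) / ω)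
      = (K₀ * l) ^ (a * l / ω) * (K₀ ^ (b / ω) * l ^ (b / ω)) := by
    rw [show (a * l + b) / ω = a * l / ω + b / ω by ring, Real.rpow_add hKl]
    congr 1
    exact Real.mul_rpow hK0.le hl0.le
  have e2 : l ^ (1 + b / ω) = l * l ^ (b / ω) := by
    rw [Real.rpow_add hl0, Real.rpow_one]
  -- the scalar bound
  have h2 : l ≤ Real.exp (l - 1) := by
    have := Real.add_one_le_exp (l - 1); linarith
  have h3 : l ^ (1 + b / ω) ≤ Real.exp ((1 + b / ω) * (l - 1)) := by
    calc l ^ (1 + b / ω) ≤ (Real.exp (l - 1)) ^ (1 + b / ω) :=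
          Real.rpow_le_rpow hl0.le h2 (by positivity)
      _ = Real.exp ((l - 1) * (1 + b / ω)) := by rw [← Real.exp_mul]
      _ = Real.exp ((1 + b / ω) * (l - 1)) := by ring_nf
  have hbω : (0:ℝ) ≤ b / ω := by positivity
  have key : 2 * M * K₀ ^ (b / ω) * l ^ (1 + b / ω)
      ≤ Real.exp ((Real.log (2 * M * K₀ ^ (b / ω)) + (1 + b / ω)) * l) := by
    calc 2 * M * K₀ ^ (b / ω) * l ^ (1 + b / ω)
        ≤ 2 * M * K₀ ^ (b / ω) * Real.exp ((1 + b / ω) * (l - 1)) :=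
          mul_le_mul_of_nonneg_left h3 hA0.le
      _ = Real.exp (Real.log (2 * M * K₀ ^ (b / ω)) + (1 + b / ω) * (l - 1)) := by
          rw [Real.exp_add, Real.exp_log hA0]
      _ ≤ Real.exp ((Real.log (2 * M * K₀ ^ (b / ω)) + (1 + b / ω)) * l) := by
          apply Real.exp_le_exp.2
          nlinarith
  calc l * (2 * M * (K₀ * l) ^ ((a * l + b) / ω))
      = (2 * M * K₀ ^ (b / ω) * l ^ (1 + b / ω)) * (K₀ * l) ^ (a * l / ω) := by
        rw [e1, e2]; ring
    _ ≤ Real.exp ((Real.log (2 * M * K₀ ^ (b / ω)) + (1 + b / ω)) * l)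
          * (K₀ * l) ^ (a * l / ω) :=
        mul_le_mul_of_nonneg_right key (Real.rpow_nonneg hKl.le _)
    _ = _ := hrhs.symm

open MeasureTheory ProbabilityTheory in
theorem stmt9 {Ω : Type*} [MeasureSpace Ω] [IsProbabilityMeasure (ℙ : Measure Ω)]
    (ε : Ω → ℝ) (hmeas : Measurable ε)
    (ω t : ℝ) (hω : 0 < ω) (ht : 0 < t)
    (hexp : Integrable fun x => Real.exp (t * |ε x| ^ ω))
    (a b : ℝ) (ha : 0 < a) (hb : 0 ≤ b)
    (μa : ℝ → ℝ)
    (hμ : ∀ c : ℝ, μa c = 1 + ∫ x, (if 1 < |ε x| then |ε x| ^ c else 0)) :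
    ∃ C : ℝ, 0 < C ∧ ∀ L : ℕ, 1 ≤ L →
      ∑ ℓ ∈ Finset.Icc 1 L, μa (a * ℓ + b) ≤ (C * L) ^ (a * L / ω) := by
  obtain ⟨M, hM_def⟩ : ∃ M : ℝ, M = ∫ x, Real.exp (t * |ε x| ^ ω) := ⟨_, rfl⟩
  have hM1 : (1:ℝ) ≤ M := by
    rw [hM_def]
    calc (1:ℝ) = ∫ (_ : Ω), (1:ℝ) := by simp
      _ ≤ _ := by
          apply integral_mono_of_nonneg (Filter.Eventually.of_forall fun x => zero_le_one)
            hexp (Filter.Eventually.of_forall fun x => ?_)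
          exact Real.one_le_exp (by positivity)
  obtain ⟨K₀, hK₀_def⟩ : ∃ K₀ : ℝ, K₀ = 1 + (a + b) / (t * ω) := ⟨_, rfl⟩
  have hK₀1 : (1:ℝ) ≤ K₀ := by
    have : 0 ≤ (a + b) / (t * ω) := by positivity
    rw [hK₀_def]; linarith
  have hK₀0 : (0:ℝ) < K₀ := lt_of_lt_of_le one_pos hK₀1
  refine ⟨K₀ * Real.exp (ω / a * (Real.log (2 * M * K₀ ^ (b / ω)) + (1 + b / ω))),
    by positivity, fun L hL => ?_⟩
  have hl : (1:ℝ) ≤ (L:ℝ) := by exact_mod_cast hL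
  have hl0 : (0:ℝ) < (L:ℝ) := lt_of_lt_of_le one_pos hl
  have hKLone : (1:ℝ) ≤ K₀ * L := by nlinarith
  -- per-term bound
  have hterm : ∀ ℓ ∈ Finset.Icc 1 L,
      μa (a * ℓ + b) ≤ 2 * M * (K₀ * L) ^ ((a * L + b) / ω) := by
    intro ℓ hℓ
    obtain ⟨hℓ1, hℓL⟩ := Finset.mem_Icc.1 hℓ
    have hℓl : (ℓ:ℝ) ≤ (L:ℝ) := by exact_mod_cast hℓL
    have hℓ1' : (1:ℝ) ≤ (ℓ:ℝ) := by exact_mod_cast hℓ1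
    have hc0 : 0 < a * (ℓ:ℝ) + b := by nlinarith
    have hint : (∫ x, (if 1 < |ε x| then |ε x| ^ (a * (ℓ:ℝ) + b) else 0))
        ≤ (max 1 ((a * (ℓ:ℝ) + b) / (t * ω))) ^ ((a * (ℓ:ℝ) + b) / ω) * M := by
      rw [hM_def]
      calc (∫ x, (if 1 < |ε x| then |ε x| ^ (a * (ℓ:ℝ) + b) else 0))
          ≤ ∫ x, (max 1 ((a * (ℓ:ℝ) + b) / (t * ω))) ^ ((a * (ℓ:ℝ) + b) / ω)
              * Real.exp (t * |ε x| ^ ω) := by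
            apply integral_mono_of_nonneg
            · exact Filter.Eventually.of_forall fun x => by positivity
            · exact hexp.const_mul _
            · exact Filter.Eventually.of_forall fun x =>
                aux_pointwise t ω (a * (ℓ:ℝ) + b) (ε x) ht hω hc0
        _ = _ := integral_const_mul _ _
    have hKcle : max 1 ((a * (ℓ:ℝ) + b) / (t * ω)) ≤ K₀ * L := by
      apply max_le
      · nlinarith
      · rw [div_le_iff₀ (by positivity)]
        have h3 : K₀ * L * (t * ω) = L * (t * ω) + (a + b) * L := by
          rw [hK₀_def]; field_simp
        nlinarith [mul_pos ht hω]
    have hpow : (max 1 ((a * (ℓ:ℝ) + b) / (t * ω))) ^ ((a * (ℓ:ℝ) + b) / ω)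
        ≤ (K₀ * L) ^ ((a * L + b) / ω) := by
      calc (max 1 ((a * (ℓ:ℝ) + b) / (t * ω))) ^ ((a * (ℓ:ℝ) + b) / ω)
          ≤ (K₀ * L) ^ ((a * (ℓ:ℝ) + b) / ω) :=
            Real.rpow_le_rpow (le_trans zero_le_one (le_max_left _ _)) hKcle
              (by positivity)
        _ ≤ (K₀ * L) ^ ((a * L + b) / ω) := by
            apply Real.rpow_le_rpow_of_exponent_le hKLone
            gcongr <;> nlinarith
    have h1M : (1:ℝ) ≤ M * (K₀ * L) ^ ((a * L + b) / ω) := by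
      have := Real.one_le_rpow hKLone (show 0 ≤ (a * L + b) / ω by positivity)
      nlinarith
    have hMpos : (0:ℝ) < M := lt_of_lt_of_le one_pos hM1
    have hpowM : (max 1 ((a * (ℓ:ℝ) + b) / (t * ω))) ^ ((a * (ℓ:ℝ) + b) / ω) * M
        ≤ (K₀ * L) ^ ((a * L + b) / ω) * M :=
      mul_le_mul_of_nonneg_right hpow hMpos.le
    rw [hμ]
    nlinarith
  calc ∑ ℓ ∈ Finset.Icc 1 L, μa (a * ℓ + b)
      ≤ (Finset.Icc 1 L).card • (2 * M * (K₀ * L) ^ ((a * L + b) / ω)) :=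
        Finset.sum_le_card_nsmul _ _ _ hterm
    _ = (L:ℝ) * (2 * M * (K₀ * L) ^ ((a * L + b) / ω)) := by
        rw [Nat.card_Icc]
        simp [nsmul_eq_mul]
    _ ≤ _ := aux_final a b ω M K₀ L ha hb hω hM1 hK₀1 hl
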